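/- arXiv:2605.06784 — 3 statements merged into one kernel-verified Lean document; each statement's English description precedes it below -/
import Mathlib

section
/- Feasibility of states: for every state μ on X and every finite patch P ⊂ Γ and level r ≥ 1, the moment sequence y^μ defined by y^μ_{[α]} = ∫_X m_α dμ is well defined (the integral depends only on the translation class [α]) and lies in F_{P,r}. Consequently ε_{P,r} ≤ ε* whenever every monomial of E has a translate in B_{P,2r}. -/
set_option synthInstance.maxHeartbeats 1000000
set_option maxHeartbeats 1000000


open MeasureTheory Filter

noncomputable section

namespace SpinBootstrap

/-- The unit sphere `S² ⊂ ℝ³`. -/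
abbrev Sphere : Type := {v : EuclideanSpace ℝ (Fin 3) // ‖v‖ = 1}

variable (d ns : ℕ)

/-- Lattice sites `Γ = ℤ^d × {1,…,n_s}`. -/
abbrev Site : Type := (Fin d → ℤ) × Fin ns

/-- Spin configurations `X = (S²)^Γ`. -/
abbrev Config : Type := Site d ns → Sphere

/-- The `a`-th Cartesian component of the spin at site `i`. -/
def comp (s : Config d ns) (i : Site d ns) (a : Fin 3) : ℝ :=
  (s i : EuclideanSpace ℝ (Fin 3)) a

/-- Multi-indices: finitely supported functions `α : Γ × {x,y,z} → ℕ`. -/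
abbrev MultiIdx : Type := (Site d ns × Fin 3) →₀ ℕ

/-- Total degree `|α|`. -/
def degree (α : MultiIdx d ns) : ℕ := α.sum fun _ k => k

/-- The monomial `m_α`. -/
def mon (α : MultiIdx d ns) (s : Config d ns) : ℝ :=
  α.prod fun p k => comp d ns s p.1 p.2 ^ k

/-- Translation of sites by `t ∈ ℤ^d`. -/
def shiftSite (t : Fin d → ℤ) (i : Site d ns) : Site d ns := (i.1 + t, i.2)

/-- Translation of sites, as an equivalence. -/
def shiftSiteEquiv (t : Fin d → ℤ) : Site d ns ≃ Site d ns where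
  toFun := shiftSite d ns t
  invFun := shiftSite d ns (-t)
  left_inv := fun i => by simp [shiftSite]
  right_inv := fun i => by simp [shiftSite]

/-- Translation acting on multi-indices. -/
def shiftIdx (t : Fin d → ℤ) (α : MultiIdx d ns) : MultiIdx d ns :=
  Finsupp.equivMapDomain ((shiftSiteEquiv d ns t).prodCongr (Equiv.refl (Fin 3))) α

/-- Translation acting on configurations. -/
def shiftConf (t : Fin d → ℤ) (s : Config d ns) : Config d ns :=
  fun i => s (shiftSite d ns (-t) i)

/-- A state: a translation-invariant Borel probability measure on `X`. -/
def IsState (μ : Measure (Config d ns)) : Prop :=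
  IsProbabilityMeasure μ ∧ ∀ t : Fin d → ℤ, Measure.map (shiftConf d ns t) μ = μ

/-- `B_{P,r}`: multi-indices supported in the patch `P` of degree at most `r`. -/
def BSet (P : Finset (Site d ns)) (r : ℕ) : Set (MultiIdx d ns) :=
  {α | (∀ p ∈ α.support, p.1 ∈ P) ∧ degree d ns α ≤ r}

/-- The feasible set `F_{P,r} ⊆ Y = [-1,1]^𝒞`, with elements of `Y` represented as
translation-invariant, `[-1,1]`-valued functions on multi-indices. -/
def Feasible (P : Finset (Site d ns)) (r : ℕ) (y : MultiIdx d ns → ℝ) : Prop :=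
  (∀ α, y α ∈ Set.Icc (-1 : ℝ) 1) ∧
  (∀ (t : Fin d → ℤ) (α : MultiIdx d ns), y (shiftIdx d ns t α) = y α) ∧
  y 0 = 1 ∧
  (∀ c : MultiIdx d ns →₀ ℝ, (∀ α ∈ c.support, α ∈ BSet d ns P r) →
    0 ≤ ∑ α ∈ c.support, ∑ β ∈ c.support, c α * c β * y (α + β)) ∧
  (∀ i ∈ P, ∀ α β : MultiIdx d ns, α ∈ BSet d ns P (r - 1) → β ∈ BSet d ns P (r - 1) →
    ∑ a : Fin 3, y (α + β + Finsupp.single (i, a) 2) = y (α + β))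

variable (M : ℕ) (a : Fin M → ℝ) (idx : Fin M → MultiIdx d ns)

/-- The objective `⟨E⟩_y = Σ_j a_j y_{[α_j]}`. -/
def energyVal (y : MultiIdx d ns → ℝ) : ℝ := ∑ j, a j * y (idx j)

/-- The energy density `E = Σ_j a_j m_{α_j}` as a function on configuration space. -/
def energyFn (s : Config d ns) : ℝ := ∑ j, a j * mon d ns (idx j) s

/-- The SDP lower bound `ε_{P,r}`. -/
def epsSDP (P : Finset (Site d ns)) (r : ℕ) : ℝ :=
  sInf {e | ∃ y, Feasible d ns P r y ∧ e = energyVal d ns M a idx y}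

/-- The ground state energy density `ε*`. -/
def epsStar : ℝ :=
  sInf {e | ∃ μ : Measure (Config d ns), IsState d ns μ ∧ e = ∫ s, energyFn d ns M a idx s ∂μ}


/-! ### Auxiliary lemmas -/

lemma sum_comp_sq (s : Config d ns) (i : Site d ns) :
    ∑ a : Fin 3, comp d ns s i a ^ 2 = 1 := by
  have h : Real.sqrt (∑ a : Fin 3, ‖(s i : EuclideanSpace ℝ (Fin 3)) a‖ ^ 2) = 1 := by
    rw [← EuclideanSpace.norm_eq]; exact (s i).2
  have h2 := Real.sqrt_eq_one.mp h
  simpa [comp, Real.norm_eq_abs, sq_abs] using h2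

lemma abs_comp_le_one (s : Config d ns) (i : Site d ns) (a : Fin 3) :
    |comp d ns s i a| ≤ 1 := by
  have h := sum_comp_sq d ns s i
  have hle : comp d ns s i a ^ 2 ≤ 1 := by
    rw [← h]
    exact Finset.single_le_sum (f := fun b => comp d ns s i b ^ 2)
      (fun b _ => sq_nonneg _) (Finset.mem_univ a)
  nlinarith [sq_abs (comp d ns s i a), abs_nonneg (comp d ns s i a),
    sq_nonneg (|comp d ns s i a| - 1)]

lemma measurable_compFn (i : Site d ns) (a : Fin 3) :
    Measurable fun s : Config d ns => comp d ns s i a := by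
  have h2 : Measurable fun v : Sphere => (EuclideanSpace.proj (𝕜 := ℝ) a)
      (v : EuclideanSpace ℝ (Fin 3)) :=
    ((EuclideanSpace.proj (𝕜 := ℝ) a).continuous.measurable).comp measurable_subtype_coe
  exact h2.comp (measurable_pi_apply i)

lemma measurable_mon (α : MultiIdx d ns) : Measurable (mon d ns α) := by
  unfold mon Finsupp.prod
  exact Finset.measurable_prod _ fun p _ => (measurable_compFn d ns p.1 p.2).pow_const _

lemma abs_mon_le_one (α : MultiIdx d ns) (s : Config d ns) : |mon d ns α s| ≤ 1 := by
  unfold mon Finsupp.prod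
  rw [Finset.abs_prod]
  refine Finset.prod_le_one (fun p _ => abs_nonneg _) fun p _ => ?_
  rw [abs_pow]
  exact pow_le_one₀ (abs_nonneg _) (abs_comp_le_one d ns s p.1 p.2)

lemma integrable_mon (μ : Measure (Config d ns)) [IsProbabilityMeasure μ]
    (α : MultiIdx d ns) : Integrable (mon d ns α) μ :=
  (integrable_const 1).mono' (measurable_mon d ns α).aestronglyMeasurable
    (ae_of_all _ fun s => by simpa [Real.norm_eq_abs] using abs_mon_le_one d ns α s)

lemma mon_add (α β : MultiIdx d ns) (s : Config d ns) :
    mon d ns (α + β) s = mon d ns α s * mon d ns β s := by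
  unfold mon
  exact Finsupp.prod_add_index' (fun p => pow_zero _) (fun p k₁ k₂ => pow_add _ _ _)

lemma mon_zero (s : Config d ns) : mon d ns 0 s = 1 := by
  unfold mon; exact Finsupp.prod_zero_index

lemma mon_single_two (i : Site d ns) (a : Fin 3) (s : Config d ns) :
    mon d ns (Finsupp.single (i, a) 2) s = comp d ns s i a ^ 2 := by
  unfold mon
  exact Finsupp.prod_single_index (pow_zero _)

lemma mon_shift (t : Fin d → ℤ) (α : MultiIdx d ns) (s : Config d ns) :
    mon d ns (shiftIdx d ns t α) s = mon d ns α (shiftConf d ns (-t) s) := by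
  unfold mon shiftIdx
  rw [Finsupp.prod_equivMapDomain]
  refine Finsupp.prod_congr fun p _ => ?_
  simp [comp, shiftConf, shiftSite, shiftSiteEquiv, neg_neg]

lemma measurable_shiftConf (t : Fin d → ℤ) : Measurable (shiftConf d ns t) :=
  measurable_pi_lambda _ fun i => measurable_pi_apply _

lemma integral_mon_shift (μ : Measure (Config d ns)) (hμ : IsState d ns μ)
    (t : Fin d → ℤ) (α : MultiIdx d ns) :
    ∫ s, mon d ns (shiftIdx d ns t α) s ∂μ = ∫ s, mon d ns α s ∂μ := by
  have : IsProbabilityMeasure μ := hμ.1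
  calc ∫ s, mon d ns (shiftIdx d ns t α) s ∂μ
      = ∫ s, mon d ns α (shiftConf d ns (-t) s) ∂μ := by
        simp_rw [mon_shift]
    _ = ∫ s, mon d ns α s ∂(Measure.map (shiftConf d ns (-t)) μ) :=
        (integral_map (measurable_shiftConf d ns (-t)).aemeasurable
          (measurable_mon d ns α).aestronglyMeasurable).symm
    _ = ∫ s, mon d ns α s ∂μ := by rw [hμ.2 (-t)]

lemma feasible_of_state (μ : Measure (Config d ns)) (hμ : IsState d ns μ)
    (P : Finset (Site d ns)) (r : ℕ) :
    Feasible d ns P r (fun α => ∫ s, mon d ns α s ∂μ) := by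
  have hP : IsProbabilityMeasure μ := hμ.1
  refine ⟨?_, fun t α => integral_mon_shift d ns μ hμ t α, ?_, ?_, ?_⟩
  · intro α
    constructor
    · have h := integral_mono (integrable_const (-1 : ℝ)) (integrable_mon d ns μ α)
        (fun s => (abs_le.mp (abs_mon_le_one d ns α s)).1)
      simpa using h
    · have h := integral_mono (integrable_mon d ns μ α) (integrable_const (1 : ℝ))
        (fun s => (abs_le.mp (abs_mon_le_one d ns α s)).2)
      simpa using h
  · simp only [mon_zero]
    simp
  · intro c hc
    have key : ∀ s : Config d ns, (∑ α ∈ c.support, c α * mon d ns α s) ^ 2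
        = ∑ α ∈ c.support, ∑ β ∈ c.support, c α * c β * mon d ns (α + β) s := by
      intro s
      rw [sq, Finset.sum_mul_sum]
      exact Finset.sum_congr rfl fun α _ => Finset.sum_congr rfl fun β _ => by
        rw [mon_add]; ring
    have h0 : (0 : ℝ) ≤ ∫ s, (∑ α ∈ c.support, c α * mon d ns α s) ^ 2 ∂μ :=
      integral_nonneg fun s => sq_nonneg _
    calc (0 : ℝ) ≤ ∫ s, (∑ α ∈ c.support, c α * mon d ns α s) ^ 2 ∂μ := h0
      _ = ∫ s, ∑ α ∈ c.support, ∑ β ∈ c.support, c α * c β * mon d ns (α + β) s ∂μ := by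
          simp_rw [key]
      _ = ∑ α ∈ c.support, ∑ β ∈ c.support, c α * c β * ∫ s, mon d ns (α + β) s ∂μ := by
          rw [integral_finset_sum _ fun α _ =>
            integrable_finset_sum _ fun β _ => (integrable_mon d ns μ (α + β)).const_mul _]
          refine Finset.sum_congr rfl fun α _ => ?_
          rw [integral_finset_sum _ fun β _ => (integrable_mon d ns μ (α + β)).const_mul _]
          exact Finset.sum_congr rfl fun β _ => integral_const_mul _ _
  · intro i _ α β _ _
    have key : ∀ s : Config d ns,
        ∑ a : Fin 3, mon d ns (α + β + Finsupp.single (i, a) 2) s = mon d ns (α + β) s := by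
      intro s
      have h1 : ∀ a : Fin 3, mon d ns (α + β + Finsupp.single (i, a) 2) s
          = mon d ns (α + β) s * comp d ns s i a ^ 2 := fun a => by
        rw [mon_add, mon_single_two]
      simp_rw [h1, ← Finset.mul_sum, sum_comp_sq, mul_one]
    calc ∑ a : Fin 3, ∫ s, mon d ns (α + β + Finsupp.single (i, a) 2) s ∂μ
        = ∫ s, ∑ a : Fin 3, mon d ns (α + β + Finsupp.single (i, a) 2) s ∂μ :=
          (integral_finset_sum _ fun a _ => integrable_mon d ns μ _).symm
      _ = ∫ s, mon d ns (α + β) s ∂μ := by simp_rw [key]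

/-- **Feasibility of states**: the moment sequence of any state is well defined (depends
only on the translation class of the multi-index) and lies in every feasible set `F_{P,r}`;
consequently `ε_{P,r} ≤ ε*`. -/
theorem state_feasible (hd : 1 ≤ d) (hns : 1 ≤ ns)
    (μ : Measure (Config d ns)) (hμ : IsState d ns μ)
    (P : Finset (Site d ns)) (r : ℕ) (hr : 1 ≤ r) :
    (∀ (t : Fin d → ℤ) (α : MultiIdx d ns),
      ∫ s, mon d ns (shiftIdx d ns t α) s ∂μ = ∫ s, mon d ns α s ∂μ) ∧
    Feasible d ns P r (fun α => ∫ s, mon d ns α s ∂μ) ∧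
    ((∀ j : Fin M, ∃ t : Fin d → ℤ, shiftIdx d ns t (idx j) ∈ BSet d ns P (2 * r)) →
      epsSDP d ns M a idx P r ≤ epsStar d ns M a idx) := by
  have hP : IsProbabilityMeasure μ := hμ.1
  refine ⟨fun t α => integral_mon_shift d ns μ hμ t α,
    feasible_of_state d ns μ hμ P r, fun _ => ?_⟩
  have hbdd : BddBelow {e | ∃ y, Feasible d ns P r y ∧ e = energyVal d ns M a idx y} := by
    refine ⟨-∑ j, |a j|, ?_⟩
    rintro e ⟨y, hy, rfl⟩
    have h : ∀ j : Fin M, -|a j| ≤ a j * y (idx j) := by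
      intro j
      have h1 : |a j * y (idx j)| ≤ |a j| := by
        rw [abs_mul]
        exact mul_le_of_le_one_right (abs_nonneg _)
          (abs_le.mpr ⟨(hy.1 (idx j)).1, (hy.1 (idx j)).2⟩)
      linarith [neg_abs_le (a j * y (idx j)), h1]
    calc -∑ j, |a j| = ∑ j, -|a j| := by rw [Finset.sum_neg_distrib]
      _ ≤ ∑ j, a j * y (idx j) := Finset.sum_le_sum fun j _ => h j
      _ = energyVal d ns M a idx y := rfl
  refine le_csInf ⟨_, μ, hμ, rfl⟩ ?_
  rintro e ⟨μ', hμ', rfl⟩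
  have hP' : IsProbabilityMeasure μ' := hμ'.1
  have hEq : energyVal d ns M a idx (fun α => ∫ s, mon d ns α s ∂μ')
      = ∫ s, energyFn d ns M a idx s ∂μ' := by
    unfold energyVal energyFn
    rw [integral_finset_sum _ fun j _ => (integrable_mon d ns μ' (idx j)).const_mul _]
    exact Finset.sum_congr rfl fun j _ => (integral_const_mul _ _).symm
  calc epsSDP d ns M a idx P r
      ≤ energyVal d ns M a idx (fun α => ∫ s, mon d ns α s ∂μ') :=
        csInf_le hbdd ⟨_, feasible_of_state d ns μ' hμ' P r, rfl⟩
    _ = ∫ s, energyFn d ns M a idx s ∂μ' := hEq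

end SpinBootstrap
end
end

section
/- Luttinger–Tisza lower bound from positive definiteness (Bochner step): let J : ℤ^d → ℝ be finitely supported with J(−R) = J(R) for all R, and let g : ℤ^d → ℝ be a positive semidefinite function with g(0) = 1, i.e. for every finitely supported c : ℤ^d → ℝ one has Σ_{R,R'} c_R c_{R'} g(R'−R) ≥ 0. Then Σ_R J(R) g(R) ≥ inf_{k ∈ ℝ^d} Ĵ(k), where Ĵ(k) := Σ_R J(R) cos(k·R). -/
noncomputable section

open Finset

/-- The Fourier transform `Ĵ(k) = Σ_R J(R) cos(k·R)` of a finitely supported coupling. -/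
def Jhat (d : ℕ) (J : (Fin d → ℤ) →₀ ℝ) (k : Fin d → ℝ) : ℝ :=
  ∑ R ∈ J.support, J R * Real.cos (∑ j, k j * (R j : ℝ))

private lemma LT_recos (x : ℝ) : (Complex.exp (x * Complex.I)).re = Real.cos x := by
  rw [Complex.exp_mul_I]
  simp [Complex.cos_ofReal_re, Complex.sin_ofReal_im]

private lemma LT_exp_fin_sum (M : ℕ) (hM : 0 < M) (s : ℤ) :
    ∑ m : Fin M, Complex.exp ((2 * Real.pi * Complex.I * s / M) * m) =
      if (M:ℤ) ∣ s then (M:ℂ) else 0 := by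
  have hMc : (M:ℂ) ≠ 0 := Nat.cast_ne_zero.mpr hM.ne'
  have hterm : ∀ m : Fin M,
      Complex.exp ((2 * Real.pi * Complex.I * s / M) * m)
        = Complex.exp (2 * Real.pi * Complex.I * s / M) ^ (m : ℕ) := by
    intro m
    rw [← Complex.exp_nat_mul]
    ring_nf
  simp only [hterm]
  by_cases h : (M:ℤ) ∣ s
  · obtain ⟨c, hc⟩ := h
    have hz : Complex.exp (2 * Real.pi * Complex.I * s / M) = 1 := by
      have : (2 * Real.pi * Complex.I * s / M : ℂ) = c * (2 * Real.pi * Complex.I) := by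
        rw [hc]; push_cast; field_simp
      rw [this, Complex.exp_int_mul_two_pi_mul_I]
    rw [if_pos ⟨c, hc⟩]
    simp [hz]
  · have hz1 : Complex.exp (2 * Real.pi * Complex.I * s / M) ≠ 1 := by
      intro he
      rw [Complex.exp_eq_one_iff] at he
      obtain ⟨n, hn⟩ := he
      apply h
      refine ⟨n, ?_⟩
      have hπ : (Real.pi : ℂ) ≠ 0 := by exact_mod_cast Real.pi_ne_zero
      have : (s : ℂ) = M * n := by
        have h2 : (2 * Real.pi * Complex.I * s / M : ℂ) * M = (n * (2 * Real.pi * Complex.I)) * M := by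
          rw [hn]
        field_simp at h2
        have hI := Complex.I_ne_zero
        have h3 : (2:ℂ) * Real.pi * Complex.I ≠ 0 := by
          simp [hπ, hI]
        have h4 : (2 * Real.pi * Complex.I) * (s:ℂ) = (2 * Real.pi * Complex.I) * (↑M * ↑n) := by
          linear_combination (2 * Real.pi * Complex.I) * h2
        exact mul_left_cancel₀ h3 h4
      exact_mod_cast this
    have hzM : Complex.exp (2 * Real.pi * Complex.I * s / M) ^ M = 1 := by
      rw [← Complex.exp_nat_mul]
      have : (M:ℂ) * (2 * Real.pi * Complex.I * s / M) = s * (2 * Real.pi * Complex.I) := by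
        field_simp
      rw [this, Complex.exp_int_mul_two_pi_mul_I]
    rw [Fin.sum_univ_eq_sum_range, geom_sum_eq hz1, hzM]
    simp [h]

private lemma LT_grid_orth (d M : ℕ) (hM : 0 < M) (S : Fin d → ℤ)
    (hS : ∀ j, (S j).natAbs < M) :
    ∑ m : Fin d → Fin M, Real.cos (∑ j, (2 * Real.pi * (m j : ℝ) / M) * (S j : ℝ)) =
      if S = 0 then (M:ℝ)^d else 0 := by
  have key : ∑ m : Fin d → Fin M,
      Complex.exp ((↑(∑ j, (2 * Real.pi * (m j : ℝ) / M) * (S j : ℝ)) : ℂ) * Complex.I)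
      = if S = 0 then (((M:ℝ)^d : ℝ) : ℂ) else 0 := by
    have h1 : ∀ m : Fin d → Fin M,
        Complex.exp ((↑(∑ j, (2 * Real.pi * (m j : ℝ) / M) * (S j : ℝ)) : ℂ) * Complex.I)
          = ∏ j, Complex.exp ((2 * Real.pi * Complex.I * (S j) / M) * (m j)) := by
      intro m
      rw [← Complex.exp_sum]
      congr 1
      push_cast
      rw [Finset.sum_mul]
      apply Finset.sum_congr rfl
      intro j _
      ring
    simp only [h1]
    rw [← Fintype.piFinset_univ]
    have hps := Finset.prod_univ_sum (fun _ : Fin d => (Finset.univ : Finset (Fin M)))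
      (fun j a => Complex.exp ((2 * Real.pi * Complex.I * (S j) / M) * a))
    rw [← hps]
    have h2 : ∀ j, ∑ a : Fin M, Complex.exp ((2 * Real.pi * Complex.I * (S j) / M) * a)
        = if S j = 0 then (M:ℂ) else 0 := by
      intro j
      rw [LT_exp_fin_sum M hM (S j)]
      by_cases h : S j = 0
      · simp [h]
      · rw [if_neg h, if_neg]
        intro hd
        exact h (Int.eq_zero_of_dvd_of_natAbs_lt_natAbs hd (by simpa using hS j))
    simp only [h2]
    by_cases hS0 : S = 0
    · rw [if_pos hS0]
      push_cast
      rw [Finset.prod_congr rfl (fun j _ => if_pos (by rw [hS0]; rfl))]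
      simp
    · rw [if_neg hS0]
      obtain ⟨j, hj⟩ : ∃ j, S j ≠ 0 := by
        by_contra hc
        push_neg at hc
        exact hS0 (funext hc)
      exact Finset.prod_eq_zero (Finset.mem_univ j) (by rw [if_neg hj])
  have := congrArg Complex.re key
  rw [Complex.re_sum] at this
  simp only [LT_recos] at this
  rw [this]
  split
  · exact Complex.ofReal_re _
  · exact Complex.zero_re

private lemma LT_count_pairs (N : ℕ) (t : ℤ) (ht : t.natAbs ≤ N) :
    ∑ a : Fin N, ∑ b : Fin N, (if ((b : ℕ) : ℤ) - ((a : ℕ) : ℤ) = t then (1:ℝ) else 0)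
      = (N : ℝ) - (t.natAbs : ℝ) := by
  have h1 : ∑ a : Fin N, ∑ b : Fin N, (if ((b : ℕ) : ℤ) - ((a : ℕ) : ℤ) = t then (1:ℝ) else 0)
      = ∑ p : Fin N × Fin N, (if ((p.2 : ℕ) : ℤ) - ((p.1 : ℕ) : ℤ) = t then (1:ℝ) else 0) := by
    rw [Fintype.sum_prod_type]
  rw [h1, Finset.sum_boole]
  have hcard : (Finset.univ.filter
      (fun p : Fin N × Fin N => ((p.2 : ℕ) : ℤ) - ((p.1 : ℕ) : ℤ) = t)).card
      = N - t.natAbs := by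
    rw [← Finset.card_range (N - t.natAbs)]
    refine Finset.card_bij' (fun p _ => min (p.1 : ℕ) (p.2 : ℕ))
      (fun a ha => (⟨a + (-t).toNat, by simp only [Finset.mem_range] at ha; omega⟩,
                    ⟨a + t.toNat, by simp only [Finset.mem_range] at ha; omega⟩))
      ?_ ?_ ?_ ?_
    · intro p hp
      simp only [Finset.mem_filter, Finset.mem_univ, true_and] at hp
      simp only [Finset.mem_range]
      have h2 := p.1.isLt
      have h3 := p.2.isLt
      omega
    · intro a ha
      simp only [Finset.mem_range] at ha
      simp only [Finset.mem_filter, Finset.mem_univ, true_and]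
      omega
    · intro p hp
      simp only [Finset.mem_filter, Finset.mem_univ, true_and] at hp
      have h2 := p.1.isLt
      have h3 := p.2.isLt
      ext
      · dsimp only
        omega
      · dsimp only
        omega
    · intro a ha
      simp only [Finset.mem_range] at ha
      dsimp only
      omega
  rw [hcard]
  push_cast [ht]
  ring

private lemma LT_quad_pos (d N : ℕ) (g : (Fin d → ℤ) → ℝ)
    (hg : ∀ c : (Fin d → ℤ) →₀ ℝ,
      0 ≤ ∑ R ∈ c.support, ∑ R' ∈ c.support, c R * c R' * g (R' - R))
    (φ : (Fin d → ℤ) → ℝ) :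
    0 ≤ ∑ x : Fin d → Fin N, ∑ y : Fin d → Fin N,
      φ (fun j => ((x j : ℕ) : ℤ)) * φ (fun j => ((y j : ℕ) : ℤ))
        * g ((fun j => ((y j : ℕ) : ℤ)) - (fun j => ((x j : ℕ) : ℤ))) := by
  set ι : (Fin d → Fin N) → (Fin d → ℤ) := fun x j => ((x j : ℕ) : ℤ) with hι
  have hinj : Function.Injective ι := by
    intro x y hxy
    funext j
    have := congrFun hxy j
    simp only [hι] at this
    exact Fin.ext (by exact_mod_cast this)
  set Λ : Finset (Fin d → ℤ) := Finset.image ι Finset.univ with hΛ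
  set f : (Fin d → ℤ) → ℝ := fun R => if R ∈ Λ then φ R else 0 with hf
  set c : (Fin d → ℤ) →₀ ℝ := Finsupp.onFinset Λ f
    (by intro R h; by_contra hc; exact h (by simp [hf, hc])) with hc
  have hsupp : c.support ⊆ Λ := Finsupp.support_onFinset_subset
  have happ : ∀ R ∈ Λ, c R = φ R := by
    intro R hR
    simp [hc, hf, hR]
  have h1 := hg c
  have h2 : ∑ R ∈ c.support, ∑ R' ∈ c.support, c R * c R' * g (R' - R)
      = ∑ R ∈ Λ, ∑ R' ∈ Λ, c R * c R' * g (R' - R) := by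
    rw [Finset.sum_subset hsupp]
    · apply Finset.sum_congr rfl
      intro R _
      rw [Finset.sum_subset hsupp]
      intro R' _ hR'
      rw [Finsupp.notMem_support_iff.mp hR']
      ring
    · intro R _ hR
      apply Finset.sum_eq_zero
      intro R' _
      rw [Finsupp.notMem_support_iff.mp hR]
      ring
  have h3 : ∑ R ∈ Λ, ∑ R' ∈ Λ, c R * c R' * g (R' - R)
      = ∑ x : Fin d → Fin N, ∑ y : Fin d → Fin N,
          φ (ι x) * φ (ι y) * g (ι y - ι x) := by
    rw [hΛ, Finset.sum_image (fun a _ b _ h => hinj h)]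
    apply Finset.sum_congr rfl
    intro x _
    rw [Finset.sum_image (fun a _ b _ h => hinj h)]
    apply Finset.sum_congr rfl
    intro y _
    rw [happ (ι x) (Finset.mem_image_of_mem ι (Finset.mem_univ x)),
        happ (ι y) (Finset.mem_image_of_mem ι (Finset.mem_univ y))]
  rw [h2, h3] at h1
  exact h1

private lemma LT_sum_pi_prod {d N : ℕ} (f : Fin d → Fin N → ℝ) :
    ∑ x : Fin d → Fin N, ∏ j, f j (x j) = ∏ j, ∑ a : Fin N, f j a := by
  have := Finset.prod_univ_sum (fun _ : Fin d => (Finset.univ : Finset (Fin N)))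
    (fun j a => f j a)
  rw [Fintype.piFinset_univ] at this
  exact this.symm

private lemma LT_inner_sum (d M : ℕ) (hM : 0 < M) (F : Finset (Fin d → ℤ))
    (K : (Fin d → ℤ) → ℝ)
    (hKout : ∀ T, T ∉ F → K T = 0) (hKsym : ∀ T, K (-T) = K T)
    (D : Fin d → ℤ) (hTD : ∀ T ∈ F, ∀ j, (T j).natAbs + (D j).natAbs < M) :
    ∑ m : Fin d → Fin M,
      (∑ T ∈ F, K T * Real.cos (∑ j, (2 * Real.pi * (m j : ℝ) / M) * (T j : ℝ)))
        * Real.cos (∑ j, (2 * Real.pi * (m j : ℝ) / M) * (D j : ℝ))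
      = (M : ℝ)^d * K D := by
  have trig : ∀ a b : ℝ, Real.cos a * Real.cos b = (Real.cos (a + b) + Real.cos (a - b)) / 2 := by
    intro a b; rw [Real.cos_add, Real.cos_sub]; ring
  have step1 : ∀ m : Fin d → Fin M,
      (∑ T ∈ F, K T * Real.cos (∑ j, (2 * Real.pi * (m j : ℝ) / M) * (T j : ℝ)))
        * Real.cos (∑ j, (2 * Real.pi * (m j : ℝ) / M) * (D j : ℝ))
      = ∑ T ∈ F, K T * ((Real.cos (∑ j, (2 * Real.pi * (m j : ℝ) / M) * ((T + D) j : ℝ))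
          + Real.cos (∑ j, (2 * Real.pi * (m j : ℝ) / M) * ((T - D) j : ℝ))) / 2) := by
    intro m
    rw [Finset.sum_mul]
    apply Finset.sum_congr rfl
    intro T _
    rw [mul_assoc, trig]
    have ha : (∑ j, (2 * Real.pi * (m j : ℝ) / M) * (T j : ℝ))
        + (∑ j, (2 * Real.pi * (m j : ℝ) / M) * (D j : ℝ))
        = ∑ j, (2 * Real.pi * (m j : ℝ) / M) * ((T + D) j : ℝ) := by
      rw [← Finset.sum_add_distrib]
      exact Finset.sum_congr rfl (fun j _ => by simp only [Pi.add_apply]; push_cast; ring)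
    have hb : (∑ j, (2 * Real.pi * (m j : ℝ) / M) * (T j : ℝ))
        - (∑ j, (2 * Real.pi * (m j : ℝ) / M) * (D j : ℝ))
        = ∑ j, (2 * Real.pi * (m j : ℝ) / M) * ((T - D) j : ℝ) := by
      rw [← Finset.sum_sub_distrib]
      exact Finset.sum_congr rfl (fun j _ => by simp only [Pi.sub_apply]; push_cast; ring)
    rw [ha, hb]
  simp only [step1]
  rw [Finset.sum_comm]
  have step2 : ∀ T ∈ F,
      ∑ m : Fin d → Fin M, K T * ((Real.cos (∑ j, (2 * Real.pi * (m j : ℝ) / M) * ((T + D) j : ℝ))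
          + Real.cos (∑ j, (2 * Real.pi * (m j : ℝ) / M) * ((T - D) j : ℝ))) / 2)
      = K T * (((if T + D = 0 then (M:ℝ)^d else 0) + (if T - D = 0 then (M:ℝ)^d else 0)) / 2) := by
    intro T hT
    rw [← Finset.mul_sum]
    congr 1
    rw [← Finset.sum_div]
    congr 1
    rw [Finset.sum_add_distrib,
      LT_grid_orth d M hM (T + D) (fun j => by
        have := hTD T hT j
        have h1 := Int.natAbs_add_le (T j) (D j)
        simp only [Pi.add_apply]
        omega),
      LT_grid_orth d M hM (T - D) (fun j => by
        have := hTD T hT j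
        have h1 := Int.natAbs_sub_le (T j) (D j)
        simp only [Pi.sub_apply]
        omega)]
  rw [Finset.sum_congr rfl step2]
  have step3 : ∀ T ∈ F,
      K T * (((if T + D = 0 then (M:ℝ)^d else 0) + (if T - D = 0 then (M:ℝ)^d else 0)) / 2)
      = ((if T = -D then K T * (M:ℝ)^d else 0) + (if T = D then K T * (M:ℝ)^d else 0)) / 2 := by
    intro T _
    have e1 : (T = -D) ↔ (T + D = 0) := by rw [add_eq_zero_iff_eq_neg]
    have e2 : (T = D) ↔ (T - D = 0) := by rw [sub_eq_zero]
    rw [if_congr e1 rfl rfl, if_congr e2 rfl rfl]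
    split_ifs <;> ring
  rw [Finset.sum_congr rfl step3, ← Finset.sum_div, Finset.sum_add_distrib,
    Finset.sum_ite_eq' F (-D) (fun T => K T * (M:ℝ)^d),
    Finset.sum_ite_eq' F D (fun T => K T * (M:ℝ)^d)]
  have hKD : (if -D ∈ F then K (-D) * (M:ℝ)^d else 0) = K D * (M:ℝ)^d := by
    split
    · rw [hKsym]
    · rw [← hKsym D, hKout (-D) (by assumption)]; ring
  have hKD2 : (if D ∈ F then K D * (M:ℝ)^d else 0) = K D * (M:ℝ)^d := by
    split
    · rfl
    · rw [hKout D (by assumption)]; ring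
  rw [hKD, hKD2]
  ring

/-- **Luttinger–Tisza lower bound from positive definiteness (Bochner step)**: if
`g : ℤ^d → ℝ` is a positive semidefinite function with `g(0) = 1` and `J` is a finitely
supported symmetric coupling, then `Σ_R J(R) g(R) ≥ inf_k Ĵ(k)`. -/
theorem luttinger_tisza_bochner (d : ℕ) (J : (Fin d → ℤ) →₀ ℝ)
    (hJ : ∀ R : Fin d → ℤ, J (-R) = J R)
    (g : (Fin d → ℤ) → ℝ)
    (hg : ∀ c : (Fin d → ℤ) →₀ ℝ,
      0 ≤ ∑ R ∈ c.support, ∑ R' ∈ c.support, c R * c R' * g (R' - R))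
    (hg0 : g 0 = 1) :
    sInf (Set.range (Jhat d J)) ≤ ∑ R ∈ J.support, J R * g R := by
  classical
  set m0 := sInf (Set.range (Jhat d J)) with hm0
  have hbdd : BddBelow (Set.range (Jhat d J)) := by
    refine ⟨-∑ R ∈ J.support, |J R|, ?_⟩
    rintro y ⟨k, rfl⟩
    have hterm : ∀ R ∈ J.support, -|J R| ≤ J R * Real.cos (∑ j, k j * (R j : ℝ)) := by
      intro R _
      have h1 : |J R * Real.cos (∑ j, k j * (R j : ℝ))| ≤ |J R| := by
        rw [abs_mul]
        calc |J R| * |Real.cos (∑ j, k j * (R j : ℝ))| ≤ |J R| * 1 :=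
              mul_le_mul_of_nonneg_left (Real.abs_cos_le_one _) (abs_nonneg _)
          _ = |J R| := mul_one _
      have h2 := neg_abs_le (J R * Real.cos (∑ j, k j * (R j : ℝ)))
      linarith
    calc -∑ R ∈ J.support, |J R| = ∑ R ∈ J.support, -|J R| := by
          rw [Finset.sum_neg_distrib]
      _ ≤ Jhat d J k := Finset.sum_le_sum hterm
  have hm0le : ∀ k, m0 ≤ Jhat d J k := fun k => csInf_le hbdd ⟨k, rfl⟩
  set F : Finset (Fin d → ℤ) := insert 0 J.support with hF
  set K : (Fin d → ℤ) → ℝ := fun T => J T - if T = 0 then m0 else 0 with hK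
  have hKout : ∀ T, T ∉ F → K T = 0 := by
    intro T hT
    have h0 : T ≠ 0 := fun h => hT (h ▸ Finset.mem_insert_self 0 J.support)
    have hs : T ∉ J.support := fun h => hT (Finset.mem_insert_of_mem h)
    simp [hK, h0, Finsupp.notMem_support_iff.mp hs]
  have hKsym : ∀ T, K (-T) = K T := by
    intro T
    simp only [hK, hJ T, neg_eq_zero]
  have hKhat : ∀ k : Fin d → ℝ,
      ∑ T ∈ F, K T * Real.cos (∑ j, k j * (T j : ℝ)) = Jhat d J k - m0 := by
    intro k
    have e1 : ∑ T ∈ F, K T * Real.cos (∑ j, k j * (T j : ℝ))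
        = (∑ T ∈ F, J T * Real.cos (∑ j, k j * (T j : ℝ)))
          - ∑ T ∈ F, (if T = 0 then m0 else 0) * Real.cos (∑ j, k j * (T j : ℝ)) := by
      rw [← Finset.sum_sub_distrib]
      exact Finset.sum_congr rfl (fun T _ => by simp only [hK]; ring)
    rw [e1]
    congr 1
    · exact (Finset.sum_subset (Finset.subset_insert 0 J.support)
        (fun T _ hT => by rw [Finsupp.notMem_support_iff.mp hT]; ring)).symm
    · have e2 : ∀ T ∈ F, (if T = 0 then m0 else 0) * Real.cos (∑ j, k j * (T j : ℝ))
          = if T = 0 then m0 * Real.cos (∑ j, k j * (((0 : Fin d → ℤ)) j : ℝ)) else 0 := by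
        intro T _
        split
        · next h => rw [h]
        · rw [zero_mul]
      rw [Finset.sum_congr rfl e2, Finset.sum_ite_eq' F 0
        (fun T => m0 * Real.cos (∑ j, k j * (((0 : Fin d → ℤ)) j : ℝ))),
        if_pos (Finset.mem_insert_self 0 J.support)]
      simp
  obtain ⟨B, hBle⟩ : ∃ B : ℕ, ∀ T ∈ F, ∀ j, (T j).natAbs ≤ B := by
    refine ⟨F.sup (fun T => Finset.univ.sup (fun j => (T j).natAbs)), ?_⟩
    intro T hT j
    have h1 : (T j).natAbs ≤ Finset.univ.sup (fun j => (T j).natAbs) :=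
      Finset.le_sup (f := fun j => (T j).natAbs) (Finset.mem_univ j)
    have h2 : Finset.univ.sup (fun j => (T j).natAbs)
        ≤ F.sup (fun T => Finset.univ.sup (fun j => (T j).natAbs)) :=
      Finset.le_sup (f := fun T => Finset.univ.sup (fun j => (T j).natAbs)) hT
    exact le_trans h1 h2
  -- finite-volume positivity
  have key : ∀ N : ℕ, 0 < N →
      0 ≤ ∑ x : Fin d → Fin N, ∑ y : Fin d → Fin N,
        K ((fun j => ((y j : ℕ) : ℤ)) - fun j => ((x j : ℕ) : ℤ))
          * g ((fun j => ((y j : ℕ) : ℤ)) - fun j => ((x j : ℕ) : ℤ)) := by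
    intro N hN
    set M := B + N with hMdef
    have hM0 : 0 < M := by omega
    have hQ : ∀ k : Fin d → ℝ, 0 ≤ ∑ x : Fin d → Fin N, ∑ y : Fin d → Fin N,
        Real.cos (∑ j, k j *
            ((((fun j => ((y j : ℕ) : ℤ)) - fun j => ((x j : ℕ) : ℤ)) j : ℤ) : ℝ))
          * g ((fun j => ((y j : ℕ) : ℤ)) - fun j => ((x j : ℕ) : ℤ)) := by
      intro k
      have h1 := LT_quad_pos d N g hg (fun R => Real.cos (∑ j, k j * (R j : ℝ)))
      have h2 := LT_quad_pos d N g hg (fun R => Real.sin (∑ j, k j * (R j : ℝ)))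
      have h3 := add_nonneg h1 h2
      rw [← Finset.sum_add_distrib] at h3
      refine le_of_le_of_eq h3 ?_
      apply Finset.sum_congr rfl
      intro x _
      rw [← Finset.sum_add_distrib]
      apply Finset.sum_congr rfl
      intro y _
      have hD : (∑ j, k j *
            ((((fun j => ((y j : ℕ) : ℤ)) - fun j => ((x j : ℕ) : ℤ)) j : ℤ) : ℝ))
          = (∑ j, k j * (((y j : ℕ) : ℤ) : ℝ)) - ∑ j, k j * (((x j : ℕ) : ℤ) : ℝ) := by
        rw [← Finset.sum_sub_distrib]
        apply Finset.sum_congr rfl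
        intro j _
        simp only [Pi.sub_apply]
        push_cast
        ring
      rw [hD, Real.cos_sub]
      ring
    have hP : 0 ≤ ∑ m : Fin d → Fin M,
        (∑ T ∈ F, K T * Real.cos (∑ j, (2 * Real.pi * (m j : ℝ) / M) * (T j : ℝ)))
          * (∑ x : Fin d → Fin N, ∑ y : Fin d → Fin N,
              Real.cos (∑ j, (2 * Real.pi * (m j : ℝ) / M) *
                ((((fun j => ((y j : ℕ) : ℤ)) - fun j => ((x j : ℕ) : ℤ)) j : ℤ) : ℝ))
                * g ((fun j => ((y j : ℕ) : ℤ)) - fun j => ((x j : ℕ) : ℤ))) := by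
      apply Finset.sum_nonneg
      intro m _
      apply mul_nonneg
      · have h : (∑ T ∈ F, K T * Real.cos (∑ j, (2 * Real.pi * (m j : ℝ) / M) * (T j : ℝ)))
            = Jhat d J (fun j => 2 * Real.pi * (m j : ℝ) / M) - m0 := hKhat _
        rw [h]
        have := hm0le (fun j => 2 * Real.pi * (m j : ℝ) / M)
        linarith
      · exact hQ (fun j => 2 * Real.pi * (m j : ℝ) / M)
    have hPeq : (∑ m : Fin d → Fin M,
        (∑ T ∈ F, K T * Real.cos (∑ j, (2 * Real.pi * (m j : ℝ) / M) * (T j : ℝ)))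
          * (∑ x : Fin d → Fin N, ∑ y : Fin d → Fin N,
              Real.cos (∑ j, (2 * Real.pi * (m j : ℝ) / M) *
                ((((fun j => ((y j : ℕ) : ℤ)) - fun j => ((x j : ℕ) : ℤ)) j : ℤ) : ℝ))
                * g ((fun j => ((y j : ℕ) : ℤ)) - fun j => ((x j : ℕ) : ℤ))))
        = (M : ℝ)^d * ∑ x : Fin d → Fin N, ∑ y : Fin d → Fin N,
            K ((fun j => ((y j : ℕ) : ℤ)) - fun j => ((x j : ℕ) : ℤ))
              * g ((fun j => ((y j : ℕ) : ℤ)) - fun j => ((x j : ℕ) : ℤ)) := by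
      have e1 : ∀ m : Fin d → Fin M,
          (∑ T ∈ F, K T * Real.cos (∑ j, (2 * Real.pi * (m j : ℝ) / M) * (T j : ℝ)))
            * (∑ x : Fin d → Fin N, ∑ y : Fin d → Fin N,
                Real.cos (∑ j, (2 * Real.pi * (m j : ℝ) / M) *
                  ((((fun j => ((y j : ℕ) : ℤ)) - fun j => ((x j : ℕ) : ℤ)) j : ℤ) : ℝ))
                  * g ((fun j => ((y j : ℕ) : ℤ)) - fun j => ((x j : ℕ) : ℤ)))
          = ∑ x : Fin d → Fin N, ∑ y : Fin d → Fin N,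
              (∑ T ∈ F, K T * Real.cos (∑ j, (2 * Real.pi * (m j : ℝ) / M) * (T j : ℝ)))
                * (Real.cos (∑ j, (2 * Real.pi * (m j : ℝ) / M) *
                    ((((fun j => ((y j : ℕ) : ℤ)) - fun j => ((x j : ℕ) : ℤ)) j : ℤ) : ℝ))
                  * g ((fun j => ((y j : ℕ) : ℤ)) - fun j => ((x j : ℕ) : ℤ))) := by
        intro m
        rw [Finset.mul_sum]
        exact Finset.sum_congr rfl (fun x _ => by rw [Finset.mul_sum])
      rw [Finset.sum_congr rfl (fun m _ => e1 m), Finset.sum_comm]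
      have e2 : ∀ x : Fin d → Fin N,
          (∑ m : Fin d → Fin M, ∑ y : Fin d → Fin N,
            (∑ T ∈ F, K T * Real.cos (∑ j, (2 * Real.pi * (m j : ℝ) / M) * (T j : ℝ)))
              * (Real.cos (∑ j, (2 * Real.pi * (m j : ℝ) / M) *
                  ((((fun j => ((y j : ℕ) : ℤ)) - fun j => ((x j : ℕ) : ℤ)) j : ℤ) : ℝ))
                * g ((fun j => ((y j : ℕ) : ℤ)) - fun j => ((x j : ℕ) : ℤ))))
          = ∑ y : Fin d → Fin N,
              ((M : ℝ)^d * K ((fun j => ((y j : ℕ) : ℤ)) - fun j => ((x j : ℕ) : ℤ)))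
                * g ((fun j => ((y j : ℕ) : ℤ)) - fun j => ((x j : ℕ) : ℤ)) := by
        intro x
        rw [Finset.sum_comm]
        apply Finset.sum_congr rfl
        intro y _
        have e3 : ∑ m : Fin d → Fin M,
            (∑ T ∈ F, K T * Real.cos (∑ j, (2 * Real.pi * (m j : ℝ) / M) * (T j : ℝ)))
              * (Real.cos (∑ j, (2 * Real.pi * (m j : ℝ) / M) *
                  ((((fun j => ((y j : ℕ) : ℤ)) - fun j => ((x j : ℕ) : ℤ)) j : ℤ) : ℝ))
                * g ((fun j => ((y j : ℕ) : ℤ)) - fun j => ((x j : ℕ) : ℤ)))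
            = (∑ m : Fin d → Fin M,
                (∑ T ∈ F, K T * Real.cos (∑ j, (2 * Real.pi * (m j : ℝ) / M) * (T j : ℝ)))
                  * Real.cos (∑ j, (2 * Real.pi * (m j : ℝ) / M) *
                      ((((fun j => ((y j : ℕ) : ℤ)) - fun j => ((x j : ℕ) : ℤ)) j : ℤ) : ℝ)))
                * g ((fun j => ((y j : ℕ) : ℤ)) - fun j => ((x j : ℕ) : ℤ)) := by
          rw [Finset.sum_mul]
          exact Finset.sum_congr rfl (fun m _ => by ring)
        rw [e3, LT_inner_sum d M hM0 F K hKout hKsym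
          ((fun j => ((y j : ℕ) : ℤ)) - fun j => ((x j : ℕ) : ℤ))
          (fun T hT j => by
            have h1 := hBle T hT j
            have h2 : (((fun j => ((y j : ℕ) : ℤ)) - fun j => ((x j : ℕ) : ℤ)) j).natAbs < N := by
              simp only [Pi.sub_apply]
              have := (x j).isLt
              have := (y j).isLt
              omega
            omega)]
      rw [Finset.sum_congr rfl (fun x _ => e2 x), Finset.mul_sum]
      apply Finset.sum_congr rfl
      intro x _
      rw [Finset.mul_sum]
      exact Finset.sum_congr rfl (fun y _ => by ring)
    rw [hPeq] at hP
    have hpow : (0:ℝ) < (M:ℝ)^d := by positivity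
    by_contra hcon
    push_neg at hcon
    nlinarith
  -- counting
  have hcount : ∀ N : ℕ, B < N →
      (∑ x : Fin d → Fin N, ∑ y : Fin d → Fin N,
        K ((fun j => ((y j : ℕ) : ℤ)) - fun j => ((x j : ℕ) : ℤ))
          * g ((fun j => ((y j : ℕ) : ℤ)) - fun j => ((x j : ℕ) : ℤ)))
      = ∑ T ∈ F, (K T * g T) * ∏ j, ((N : ℝ) - ((T j).natAbs : ℝ)) := by
    intro N hBN
    have hexp : ∀ x y : Fin d → Fin N,
        K ((fun j => ((y j : ℕ) : ℤ)) - fun j => ((x j : ℕ) : ℤ))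
          * g ((fun j => ((y j : ℕ) : ℤ)) - fun j => ((x j : ℕ) : ℤ))
        = ∑ T ∈ F, (K T * g T)
            * ∏ j, (if ((y j : ℕ) : ℤ) - ((x j : ℕ) : ℤ) = T j then (1:ℝ) else 0) := by
      intro x y
      have h1 : ∀ T ∈ F, (K T * g T)
          * ∏ j, (if ((y j : ℕ) : ℤ) - ((x j : ℕ) : ℤ) = T j then (1:ℝ) else 0)
          = if T = ((fun j => ((y j : ℕ) : ℤ)) - fun j => ((x j : ℕ) : ℤ)) then K T * g T
            else 0 := by
        intro T _
        rw [Finset.prod_boole]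
        have hiff : (∀ j ∈ Finset.univ, ((y j : ℕ) : ℤ) - ((x j : ℕ) : ℤ) = T j)
            ↔ (T = ((fun j => ((y j : ℕ) : ℤ)) - fun j => ((x j : ℕ) : ℤ))) := by
          constructor
          · intro h
            funext j
            have := h j (Finset.mem_univ j)
            simp only [Pi.sub_apply]
            omega
          · intro h j _
            rw [h]
            simp only [Pi.sub_apply]
        simp only [hiff]
        split_ifs <;> ring
      rw [Finset.sum_congr rfl h1, Finset.sum_ite_eq' F
        ((fun j => ((y j : ℕ) : ℤ)) - fun j => ((x j : ℕ) : ℤ)) (fun T => K T * g T)]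
      split
      · rfl
      · next h => rw [hKout _ h]; ring
    rw [Finset.sum_congr rfl (fun x _ => Finset.sum_congr rfl (fun y _ => hexp x y))]
    have hswap : (∑ x : Fin d → Fin N, ∑ y : Fin d → Fin N, ∑ T ∈ F, (K T * g T)
          * ∏ j, (if ((y j : ℕ) : ℤ) - ((x j : ℕ) : ℤ) = T j then (1:ℝ) else 0))
        = ∑ T ∈ F, ∑ x : Fin d → Fin N, ∑ y : Fin d → Fin N, (K T * g T)
          * ∏ j, (if ((y j : ℕ) : ℤ) - ((x j : ℕ) : ℤ) = T j then (1:ℝ) else 0) := by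
      rw [Finset.sum_congr rfl (fun x (_ : x ∈ Finset.univ) => Finset.sum_comm), Finset.sum_comm]
    rw [hswap]
    apply Finset.sum_congr rfl
    intro T hT
    have e4 : ∀ x : Fin d → Fin N,
        ∑ y : Fin d → Fin N, (K T * g T)
          * ∏ j, (if ((y j : ℕ) : ℤ) - ((x j : ℕ) : ℤ) = T j then (1:ℝ) else 0)
        = (K T * g T) * ∏ j, ∑ b : Fin N,
            (if ((b : ℕ) : ℤ) - ((x j : ℕ) : ℤ) = T j then (1:ℝ) else 0) := by
      intro x
      rw [← Finset.mul_sum]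
      congr 1
      exact LT_sum_pi_prod (fun j b => if ((b : ℕ) : ℤ) - ((x j : ℕ) : ℤ) = T j then (1:ℝ) else 0)
    rw [Finset.sum_congr rfl (fun x _ => e4 x), ← Finset.mul_sum]
    congr 1
    rw [LT_sum_pi_prod (fun j a => ∑ b : Fin N,
      (if ((b : ℕ) : ℤ) - ((a : ℕ) : ℤ) = T j then (1:ℝ) else 0))]
    apply Finset.prod_congr rfl
    intro j _
    exact LT_count_pairs N (T j) (le_trans (hBle T hT j) (le_of_lt hBN))
  -- limit argument
  set L := ∑ T ∈ F, K T * g T with hL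
  have hfN : ∀ N : ℕ, B < N →
      0 ≤ ∑ T ∈ F, (K T * g T) * ∏ j : Fin d, (1 - ((T j).natAbs : ℝ) / (N : ℝ)) := by
    intro N hBN
    have hNpos : (0:ℝ) < (N:ℝ) := by
      have : 0 < N := by omega
      exact_mod_cast this
    have h0 : 0 ≤ ∑ T ∈ F, (K T * g T) * ∏ j, ((N : ℝ) - ((T j).natAbs : ℝ)) := by
      rw [← hcount N hBN]
      exact key N (by omega)
    have e : ∀ T ∈ F, (K T * g T) * ∏ j : Fin d, (1 - ((T j).natAbs : ℝ) / (N : ℝ))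
        = ((K T * g T) * ∏ j, ((N : ℝ) - ((T j).natAbs : ℝ))) * ((N:ℝ)⁻¹)^d := by
      intro T _
      have ep : ∏ j : Fin d, (1 - ((T j).natAbs : ℝ) / (N : ℝ))
          = ∏ j : Fin d, (((N : ℝ) - ((T j).natAbs : ℝ)) * (N:ℝ)⁻¹) := by
        apply Finset.prod_congr rfl
        intro j _
        field_simp
      rw [ep, Finset.prod_mul_distrib, Finset.prod_const, Finset.card_univ, Fintype.card_fin]
      ring
    rw [Finset.sum_congr rfl e, ← Finset.sum_mul]
    exact mul_nonneg h0 (by positivity)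
  have hlim : Filter.Tendsto
      (fun N : ℕ => ∑ T ∈ F, (K T * g T) * ∏ j : Fin d, (1 - ((T j).natAbs : ℝ) / (N : ℝ)))
      Filter.atTop (nhds L) := by
    rw [hL]
    have : ∀ T ∈ F, Filter.Tendsto
        (fun N : ℕ => (K T * g T) * ∏ j : Fin d, (1 - ((T j).natAbs : ℝ) / (N : ℝ)))
        Filter.atTop (nhds (K T * g T)) := by
      intro T _
      have hprod : Filter.Tendsto
          (fun N : ℕ => ∏ j : Fin d, (1 - ((T j).natAbs : ℝ) / (N : ℝ)))
          Filter.atTop (nhds (∏ j : Fin d, (1:ℝ))) := by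
        apply tendsto_finset_prod
        intro j _
        have h := tendsto_const_div_atTop_nhds_zero_nat (((T j).natAbs : ℝ))
        have h2 := (tendsto_const_nhds (α := ℕ) (x := (1:ℝ))).sub h
        simpa using h2
      have h3 := hprod.const_mul (K T * g T)
      simpa using h3
    exact tendsto_finset_sum F this
  have hL0 : 0 ≤ L :=
    ge_of_tendsto hlim (Filter.eventually_atTop.mpr ⟨B + 1, fun N hN => hfN N (by omega)⟩)
  have hsplit : L = (∑ R ∈ J.support, J R * g R) - m0 := by
    rw [hL]
    have e1 : ∑ T ∈ F, K T * g T
        = (∑ T ∈ F, J T * g T) - ∑ T ∈ F, (if T = 0 then m0 else 0) * g T := by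
      rw [← Finset.sum_sub_distrib]
      exact Finset.sum_congr rfl (fun T _ => by simp only [hK]; ring)
    rw [e1]
    congr 1
    · exact (Finset.sum_subset (Finset.subset_insert 0 J.support)
        (fun T _ hT => by rw [Finsupp.notMem_support_iff.mp hT]; ring)).symm
    · simp only [ite_mul, zero_mul]
      rw [Finset.sum_ite_eq' F 0 (fun T => m0 * g T),
        if_pos (Finset.mem_insert_self 0 J.support), hg0, mul_one]
  linarith [hL0, hsplit.symm ▸ hL0]
end
end

section
/- Luttinger–Tisza lower bound for periodic spin configurations: let N ≥ 1, let J : ℤ^d → ℝ be finitely supported with J(−R) = J(R), and let S : ℤ^d → ℝ³ satisfy ‖S_x‖ = 1 for all x and be N-periodic in each coordinate (S_{x + N e_j} = S_x for all x and each standard basis vector e_j). Then the energy density (1/N^d) Σ_{x ∈ {0,…,N−1}^d} Σ_{R ∈ ℤ^d} J(R) ⟨S_x, S_{x+R}⟩ ≥ min over m ∈ {0,…,N−1}^d of Ĵ(2πm/N), where Ĵ(k) := Σ_R J(R) cos(k·R). -/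
noncomputable section

namespace LTaux

open Complex Finset


variable {d N : ℕ}

/-- character -/
def χ (N : ℕ) {d : ℕ} (m y : Fin d → ℤ) : ℂ :=
  Complex.exp (2 * Real.pi * Complex.I * (∑ j, (m j : ℂ) * (y j : ℂ)) / N)

lemma χ_add (m y z : Fin d → ℤ) : χ N m (y + z) = χ N m y * χ N m z := by
  rw [χ, χ, χ, ← Complex.exp_add]
  congr 1
  rw [← add_div, ← mul_add, ← Finset.sum_add_distrib]
  congr 2
  refine Finset.sum_congr rfl fun j _ => ?_
  simp only [Pi.add_apply]
  push_cast
  ring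

lemma orth1 (hN : 0 < N) (b : ℤ) :
    ∑ a : Fin N, Complex.exp (2 * Real.pi * Complex.I * a * b / N)
      = if (N : ℤ) ∣ b then (N : ℂ) else 0 := by
  have hNC : (N : ℂ) ≠ 0 := Nat.cast_ne_zero.mpr hN.ne'
  set ζ : ℂ := Complex.exp (2 * Real.pi * Complex.I * b / N) with hζ
  have hpow : ∀ a : ℕ, ζ ^ a = Complex.exp (2 * Real.pi * Complex.I * a * b / N) := by
    intro a
    rw [hζ, ← Complex.exp_nat_mul]
    congr 1
    ring
  have hζN : ζ ^ N = 1 := by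
    rw [hpow]
    have : 2 * (Real.pi : ℂ) * Complex.I * N * b / N = b * (2 * Real.pi * Complex.I) := by
      field_simp
    rw [this, Complex.exp_int_mul_two_pi_mul_I]
  have hζ1 : ζ = 1 ↔ (N : ℤ) ∣ b := by
    rw [hζ, Complex.exp_eq_one_iff]
    constructor
    · rintro ⟨n, hn⟩
      refine ⟨n, ?_⟩
      have h2 : (2 * (Real.pi : ℂ) * Complex.I) ≠ 0 := by
        simp [Real.pi_ne_zero, Complex.I_ne_zero]
      have hb : (2 * (Real.pi : ℂ) * Complex.I) * b = (2 * (Real.pi : ℂ) * Complex.I) * (n * N) := by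
        field_simp at hn
        linear_combination (2 * (Real.pi : ℂ) * Complex.I) * hn
      have : (b : ℂ) = (n : ℂ) * N := mul_left_cancel₀ h2 hb
      have hb' : b = n * (N : ℤ) := by exact_mod_cast this
      rw [hb', mul_comm]
    · rintro ⟨n, rfl⟩
      exact ⟨n, by push_cast; field_simp⟩
  have hsum : ∑ a : Fin N, Complex.exp (2 * Real.pi * Complex.I * a * b / N)
      = ∑ i ∈ Finset.range N, ζ ^ i := by
    rw [Finset.sum_range fun i => ζ ^ i]
    exact Finset.sum_congr rfl fun a _ => (hpow a).symm
  rw [hsum]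
  by_cases h : (N : ℤ) ∣ b
  · rw [if_pos h]
    have : ζ = 1 := hζ1.mpr h
    simp [this]
  · rw [if_neg h]
    have hζne : ζ ≠ 1 := fun hc => h (hζ1.mp hc)
    rw [geom_sum_eq hζne, hζN]
    simp

lemma orthd (hN : 0 < N) (z : Fin d → ℤ) :
    ∑ m : Fin d → Fin N, χ N (fun j => ((m j : ℤ))) z
      = if (∀ j, (N : ℤ) ∣ z j) then ((N : ℂ) ^ d) else 0 := by
  have step : ∀ m : Fin d → Fin N, χ N (fun j => ((m j : ℤ))) z
      = ∏ j, Complex.exp (2 * Real.pi * Complex.I * (m j) * (z j) / N) := by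
    intro m
    rw [χ, ← Complex.exp_sum]
    congr 1
    rw [Finset.mul_sum, Finset.sum_div]
    refine Finset.sum_congr rfl fun j _ => ?_
    push_cast
    ring
  simp_rw [step]
  rw [← Fintype.piFinset_univ]
  have hps := Finset.prod_univ_sum (fun _ : Fin d => (Finset.univ : Finset (Fin N)))
    (fun j a => Complex.exp (2 * Real.pi * Complex.I * a * z j / N))
  rw [← hps]
  simp_rw [orth1 hN]
  by_cases h : ∀ j, (N : ℤ) ∣ z j
  · rw [if_pos h]
    rw [Finset.prod_congr rfl (fun j _ => if_pos (h j)), Finset.prod_const,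
      Finset.card_univ, Fintype.card_fin]
  · rw [if_neg h]
    push_neg at h
    obtain ⟨j, hj⟩ := h
    exact Finset.prod_eq_zero (Finset.mem_univ j) (if_neg hj)

lemma χ_eq_exp (m y : Fin d → ℤ) :
    χ N m y = Complex.exp (((2 * Real.pi * (∑ j, (m j : ℝ) * (y j : ℝ)) / N : ℝ)) * Complex.I) := by
  rw [χ]
  congr 1
  push_cast
  ring

lemma sum_support_neg (J : (Fin d → ℤ) →₀ ℝ) (hJ : ∀ R : Fin d → ℤ, J (-R) = J R)
    (f : (Fin d → ℤ) → ℂ) :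
    ∑ R ∈ J.support, (J R : ℂ) * f R = ∑ R ∈ J.support, (J R : ℂ) * f (-R) := by
  refine Finset.sum_nbij' (fun R => -R) (fun R => -R) ?_ ?_ ?_ ?_ ?_
  · intro R hR
    simp only [Finsupp.mem_support_iff] at hR ⊢
    rwa [hJ]
  · intro R hR
    simp only [Finsupp.mem_support_iff] at hR ⊢
    rwa [hJ]
  · intro R _; simp
  · intro R _; simp
  · intro R _
    rw [hJ, neg_neg]

lemma Jhat_cast (hN : 0 < N) (J : (Fin d → ℤ) →₀ ℝ) (hJ : ∀ R : Fin d → ℤ, J (-R) = J R)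
    (m : Fin d → Fin N) :
    ∑ R ∈ J.support, (J R : ℂ) * χ N (fun j => ((m j : ℤ))) R
      = ((∑ R ∈ J.support, J R * Real.cos (∑ j, (2 * Real.pi * (m j : ℝ) / N) * (R j : ℝ))) : ℝ) := by
  set θ : (Fin d → ℤ) → ℝ := fun R => 2 * Real.pi * (∑ j, ((m j : ℕ) : ℝ) * ((R j : ℤ) : ℝ)) / N
    with hθ
  have hχ : ∀ R : Fin d → ℤ, χ N (fun j => ((m j : ℤ))) R
      = Complex.exp ((θ R : ℝ) * Complex.I) := by
    intro R
    rw [χ_eq_exp, hθ]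
    norm_cast
  have hθneg : ∀ R : Fin d → ℤ, θ (-R) = -θ R := by
    intro R
    simp only [hθ, Pi.neg_apply, Int.cast_neg, mul_neg, Finset.sum_neg_distrib]
    ring
  have key := sum_support_neg J hJ (fun R => χ N (fun j => ((m j : ℤ))) R)
  have h2 : (2 : ℂ) * ∑ R ∈ J.support, (J R : ℂ) * χ N (fun j => ((m j : ℤ))) R
      = (2 : ℂ) * ∑ R ∈ J.support, (J R : ℂ) * Complex.cos ((θ R : ℝ)) := by
    rw [two_mul]
    nth_rewrite 2 [key]
    rw [← Finset.sum_add_distrib, Finset.mul_sum]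
    refine Finset.sum_congr rfl fun R _ => ?_
    rw [hχ R, hχ (-R), hθneg R]
    have := Complex.two_cos ((θ R : ℝ) : ℂ)
    push_cast at this ⊢
    linear_combination (-(J R : ℂ)) * this
  have h3 := mul_left_cancel₀ (two_ne_zero' ℂ) h2
  rw [h3, Complex.ofReal_sum]
  refine Finset.sum_congr rfl fun R _ => ?_
  rw [Complex.ofReal_mul, ← Complex.ofReal_cos]
  congr 2
  simp only [hθ]
  rw [Finset.mul_sum, Finset.sum_div]
  congr 1
  refine Finset.sum_congr rfl fun j _ => ?_
  push_cast
  ring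

lemma χ_conj (m y : Fin d → ℤ) : (starRingEnd ℂ) (χ N m y) = χ N m (-y) := by
  rw [χ_eq_exp, χ_eq_exp, ← Complex.exp_conj]
  have hs : (∑ j, (m j : ℝ) * (((-y) j : ℤ) : ℝ)) = -(∑ j, (m j : ℝ) * ((y j : ℤ) : ℝ)) := by
    simp [mul_neg, Finset.sum_neg_distrib]
  rw [hs]
  congr 1
  simp only [map_mul, Complex.conj_ofReal, Complex.conj_I]
  push_cast
  ring

lemma χ_N_mul (hN : 0 < N) (m t : Fin d → ℤ) : χ N m (fun i => (N : ℤ) * t i) = 1 := by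
  have hNC : (N : ℂ) ≠ 0 := Nat.cast_ne_zero.mpr hN.ne'
  have hsum : (∑ j, (m j : ℂ) * ((((N : ℤ) * t j) : ℤ) : ℂ))
      = (N : ℂ) * ∑ j, (m j : ℂ) * (t j : ℂ) := by
    rw [Finset.mul_sum]
    refine Finset.sum_congr rfl fun j _ => ?_
    push_cast
    ring
  rw [χ]
  rw [show (∑ j, (m j : ℂ) * (((fun i => (N : ℤ) * t i) j : ℤ) : ℂ)) = (N : ℂ) * ∑ j, (m j : ℂ) * (t j : ℂ) from hsum]
  have harg : 2 * (Real.pi : ℂ) * Complex.I * ((N : ℂ) * ∑ j, (m j : ℂ) * (t j : ℂ)) / N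
      = ((∑ j, m j * t j : ℤ) : ℂ) * (2 * Real.pi * Complex.I) := by
    push_cast
    field_simp
  rw [harg, Complex.exp_int_mul_two_pi_mul_I]

def rho (hN : 0 < N) (z : Fin d → ℤ) : Fin d → Fin N := fun i =>
  ⟨(z i % (N : ℤ)).toNat, by
    have h1 : 0 ≤ z i % (N : ℤ) := Int.emod_nonneg _ (by exact_mod_cast hN.ne')
    have h2 : z i % (N : ℤ) < N := Int.emod_lt_of_pos _ (by exact_mod_cast hN)
    omega⟩

lemma rho_coe (hN : 0 < N) (z : Fin d → ℤ) (i : Fin d) :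
    ((rho hN z i : ℕ) : ℤ) = z i % (N : ℤ) := by
  have h1 : 0 ≤ z i % (N : ℤ) := Int.emod_nonneg _ (by exact_mod_cast hN.ne')
  simp only [rho]
  omega

lemma rho_dvd (hN : 0 < N) (z : Fin d → ℤ) (j : Fin d) :
    (N : ℤ) ∣ (z j - ((rho hN z j : ℕ) : ℤ)) := by
  rw [rho_coe]
  exact Int.dvd_self_sub_of_emod_eq rfl

lemma box_eq_iff (hN : 0 < N) (z : Fin d → ℤ) (y : Fin d → Fin N) :
    (∀ j, (N : ℤ) ∣ (z j - ((y j : ℕ) : ℤ))) ↔ y = rho hN z := by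
  constructor
  · intro h
    funext j
    have h1 := rho_dvd hN z j
    have h2 := (h j).sub h1
    have h3 : (N : ℤ) ∣ (((rho hN z j : ℕ) : ℤ) - ((y j : ℕ) : ℤ)) := by
      have : (z j - ((y j : ℕ) : ℤ)) - (z j - ((rho hN z j : ℕ) : ℤ))
          = ((rho hN z j : ℕ) : ℤ) - ((y j : ℕ) : ℤ) := by ring
      rwa [this] at h2
    have hb1 : ((rho hN z j : ℕ) : ℤ) < N := by exact_mod_cast (rho hN z j).isLt
    have hb2 : ((y j : ℕ) : ℤ) < N := by exact_mod_cast (y j).isLt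
    have h0 : (((rho hN z j : ℕ) : ℤ) - ((y j : ℕ) : ℤ)) = 0 := by
      refine Int.eq_zero_of_abs_lt_dvd h3 ?_
      rw [abs_lt]
      omega
    have : (rho hN z j : ℕ) = (y j : ℕ) := by omega
    exact (Fin.ext this).symm
  · rintro rfl
    exact rho_dvd hN z

lemma dvd_iff_eq_rho (hN : 0 < N) (z : Fin d → ℤ) (y : Fin d → Fin N) (v : Fin d → ℤ)
    (hv : ∀ j, v j = z j - ((y j : ℕ) : ℤ)) :
    (∀ j, (N : ℤ) ∣ v j) ↔ y = rho hN z := by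
  rw [← box_eq_iff hN z y]
  exact forall_congr' fun j => by rw [hv j]

lemma rho_box (hN : 0 < N) (x : Fin d → Fin N) : rho hN (fun i => ((x i : ℕ) : ℤ)) = x := by
  funext i
  have := rho_coe hN (fun i => ((x i : ℕ) : ℤ)) i
  have hb : ((x i : ℕ) : ℤ) < N := by exact_mod_cast (x i).isLt
  have hnn : (0 : ℤ) ≤ ((x i : ℕ) : ℤ) := by positivity
  have hm : ((x i : ℕ) : ℤ) % (N : ℤ) = ((x i : ℕ) : ℤ) := Int.emod_eq_of_lt hnn hb
  rw [hm] at this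
  exact Fin.ext (by exact_mod_cast this)

lemma sum_rot3 {M : Type*} [AddCommMonoid M] {A B C : Type*}
    (sa : Finset A) (sb : Finset B) (sc : Finset C) (f : A → B → C → M) :
    ∑ a ∈ sa, ∑ b ∈ sb, ∑ c ∈ sc, f a b c = ∑ b ∈ sb, ∑ c ∈ sc, ∑ a ∈ sa, f a b c := by
  rw [Finset.sum_comm]
  exact Finset.sum_congr rfl fun b _ => Finset.sum_comm

lemma sum_rot4 {M : Type*} [AddCommMonoid M] {A B C D : Type*}
    (sa : Finset A) (sb : Finset B) (sc : Finset C) (sd : Finset D) (f : A → B → C → D → M) :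
    ∑ a ∈ sa, ∑ b ∈ sb, ∑ c ∈ sc, ∑ d ∈ sd, f a b c d
      = ∑ b ∈ sb, ∑ c ∈ sc, ∑ d ∈ sd, ∑ a ∈ sa, f a b c d := by
  rw [Finset.sum_comm]
  exact Finset.sum_congr rfl fun b _ => sum_rot3 _ _ _ _

lemma sum_rot5 {M : Type*} [AddCommMonoid M] {A B C D E : Type*}
    (sa : Finset A) (sb : Finset B) (sc : Finset C) (sd : Finset D) (se : Finset E)
    (f : A → B → C → D → E → M) :
    ∑ a ∈ sa, ∑ b ∈ sb, ∑ c ∈ sc, ∑ d ∈ sd, ∑ e ∈ se, f a b c d e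
      = ∑ b ∈ sb, ∑ c ∈ sc, ∑ d ∈ sd, ∑ e ∈ se, ∑ a ∈ sa, f a b c d e := by
  rw [Finset.sum_comm]
  exact Finset.sum_congr rfl fun b _ => sum_rot4 _ _ _ _ _

section spins
variable {S : (Fin d → ℤ) → EuclideanSpace ℝ (Fin 3)}

lemma per_single (hper : ∀ (x : Fin d → ℤ) (j : Fin d),
      S (x + fun i => if i = j then (N : ℤ) else 0) = S x)
    (j : Fin d) (n : ℤ) (y : Fin d → ℤ) :
    S (y + fun i => if i = j then n * N else 0) = S y := by
  induction n using Int.induction_on with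
  | zero =>
    have h0 : (y + fun i => if i = j then (0 : ℤ) * N else 0) = y := by
      funext i
      by_cases h : i = j <;> simp [h]
    rw [h0]
  | succ k ih =>
    have h1 : (y + fun i => if i = j then ((k : ℤ) + 1) * N else 0)
        = (y + fun i => if i = j then (k : ℤ) * N else 0)
          + fun i => if i = j then (N : ℤ) else 0 := by
      funext i
      simp only [Pi.add_apply]
      by_cases h : i = j <;> simp [h] <;> ring
    rw [h1, hper, ih]
  | pred k ih =>
    have h1 : (y + fun i => if i = j then (-(k : ℤ) - 1) * N else 0)
          + (fun i => if i = j then (N : ℤ) else 0)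
        = y + fun i => if i = j then (-(k : ℤ)) * N else 0 := by
      funext i
      simp only [Pi.add_apply]
      by_cases h : i = j <;> simp [h] <;> ring
    have h2 := hper (y + fun i => if i = j then (-(k : ℤ) - 1) * N else 0) j
    rw [h1] at h2
    rw [← h2, ih]

lemma per_finset (hper : ∀ (x : Fin d → ℤ) (j : Fin d),
      S (x + fun i => if i = j then (N : ℤ) else 0) = S x)
    (u : Finset (Fin d)) (t : Fin d → ℤ) (y : Fin d → ℤ) :
    S (y + fun i => if i ∈ u then (N : ℤ) * t i else 0) = S y := by
  classical
  induction u using Finset.induction_on generalizing y with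
  | empty =>
    have h0 : (y + fun i => if i ∈ (∅ : Finset (Fin d)) then (N : ℤ) * t i else 0) = y := by
      funext i
      simp
    rw [h0]
  | @insert a u ha ih =>
    have hsplit : (fun i => if i ∈ insert a u then (N : ℤ) * t i else 0)
        = (fun i => if i ∈ u then (N : ℤ) * t i else 0)
          + fun i => if i = a then (t a) * N else 0 := by
      funext i
      simp only [Pi.add_apply, Finset.mem_insert]
      by_cases h1 : i = a
      · subst h1
        simp [ha, mul_comm]
      · by_cases h2 : i ∈ u <;> simp [h1, h2]
    rw [hsplit, ← add_assoc, per_single hper, ih]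

lemma S_rho (hN : 0 < N) (hper : ∀ (x : Fin d → ℤ) (j : Fin d),
      S (x + fun i => if i = j then (N : ℤ) else 0) = S x)
    (z : Fin d → ℤ) :
    S (fun i => ((rho hN z i : ℤ))) = S z := by
  have key := per_finset hper Finset.univ (fun i => z i / N) (fun i => ((rho hN z i : ℤ)))
  have harg : ((fun i => ((rho hN z i : ℤ)))
      + fun i => if i ∈ Finset.univ then (N : ℤ) * (z i / N) else 0) = z := by
    funext i
    simp only [Pi.add_apply, Finset.mem_univ, if_true, rho_coe hN z i]
    exact Int.emod_add_mul_ediv (z i) (N : ℤ)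
  rw [harg] at key
  rw [key]

lemma sum_sq_eq_one (v : EuclideanSpace ℝ (Fin 3)) (h : ‖v‖ = 1) :
    ∑ c, v c * v c = 1 := by
  have h1 : (inner ℝ v v : ℝ) = ‖v‖ ^ 2 := real_inner_self_eq_norm_sq v
  rw [h, one_pow] at h1
  rw [← h1, PiLp.inner_apply]
  simp [RCLike.inner_apply, conj_trivial, sq]

lemma inner_eq_sum (v w : EuclideanSpace ℝ (Fin 3)) : (inner ℝ v w : ℝ) = ∑ c, v c * w c := by
  simp [PiLp.inner_apply, RCLike.inner_apply, conj_trivial, mul_comm]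

/-- discrete Fourier transform of the spin components -/
def F (N : ℕ) (S : (Fin d → ℤ) → EuclideanSpace ℝ (Fin 3)) (m : Fin d → Fin N) (c : Fin 3) : ℂ :=
  ∑ x : Fin d → Fin N, ((S (fun i => ((x i : ℤ))) c : ℝ) : ℂ)
    * χ N (fun j => ((m j : ℤ))) (fun i => ((x i : ℤ)))

lemma F_def (m : Fin d → Fin N) (c : Fin 3) : F N S m c
    = ∑ x : Fin d → Fin N, ((S (fun i => ((x i : ℤ))) c : ℝ) : ℂ)
      * χ N (fun j => ((m j : ℤ))) (fun i => ((x i : ℤ))) := rfl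

lemma F_conj (m : Fin d → Fin N) (c : Fin 3) :
    (starRingEnd ℂ) (F N S m c)
      = ∑ y : Fin d → Fin N, ((S (fun i => ((y i : ℤ))) c : ℝ) : ℂ)
        * χ N (fun j => ((m j : ℤ))) (-(fun i => ((y i : ℤ)))) := by
  rw [F_def, map_sum]
  exact Finset.sum_congr rfl fun y _ => by rw [map_mul, Complex.conj_ofReal, χ_conj]

lemma sum_box_collapse (hN : 0 < N) (f : (Fin d → Fin N) → ℂ) (z : Fin d → ℤ) :
    (∑ y : Fin d → Fin N, if y = rho hN z then f y else 0) = f (rho hN z) := by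
  simp

lemma parseval (hN : 0 < N) (hunit : ∀ z, ‖S z‖ = 1) :
    ∑ m : Fin d → Fin N, ∑ c : Fin 3, F N S m c * (starRingEnd ℂ) (F N S m c)
      = ((N : ℂ) ^ d) * ((N : ℂ) ^ d) := by
  have step1 : ∑ m : Fin d → Fin N, ∑ c : Fin 3, F N S m c * (starRingEnd ℂ) (F N S m c)
      = ∑ m : Fin d → Fin N, ∑ c : Fin 3, ∑ x : Fin d → Fin N, ∑ y : Fin d → Fin N,
          (((S (fun i => ((x i : ℤ))) c * S (fun i => ((y i : ℤ))) c : ℝ)) : ℂ)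
            * χ N (fun j => ((m j : ℤ)))
              ((fun i => ((x i : ℤ))) + -(fun i => ((y i : ℤ)))) := by
    refine Finset.sum_congr rfl fun m _ => Finset.sum_congr rfl fun c _ => ?_
    rw [F_conj, F_def, Finset.sum_mul_sum]
    refine Finset.sum_congr rfl fun x _ => Finset.sum_congr rfl fun y _ => ?_
    rw [χ_add]
    push_cast
    ring
  rw [step1, sum_rot4]
  have step3 : ∀ c : Fin 3, ∀ x : Fin d → Fin N,
      (∑ y : Fin d → Fin N, ∑ m : Fin d → Fin N,
        (((S (fun i => ((x i : ℤ))) c * S (fun i => ((y i : ℤ))) c : ℝ)) : ℂ)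
          * χ N (fun j => ((m j : ℤ)))
            ((fun i => ((x i : ℤ))) + -(fun i => ((y i : ℤ)))))
      = (((S (fun i => ((x i : ℤ))) c * S (fun i => ((x i : ℤ))) c : ℝ)) : ℂ) * (N : ℂ) ^ d := by
    intro c x
    have hy : ∀ y : Fin d → Fin N,
        (∑ m : Fin d → Fin N,
          (((S (fun i => ((x i : ℤ))) c * S (fun i => ((y i : ℤ))) c : ℝ)) : ℂ)
            * χ N (fun j => ((m j : ℤ)))
              ((fun i => ((x i : ℤ))) + -(fun i => ((y i : ℤ)))))
        = if y = rho hN (fun i => ((x i : ℤ)))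
            then (((S (fun i => ((x i : ℤ))) c * S (fun i => ((y i : ℤ))) c : ℝ)) : ℂ) * (N : ℂ) ^ d
            else 0 := by
      intro y
      rw [← Finset.mul_sum, orthd hN, mul_ite, mul_zero]
      exact if_congr (dvd_iff_eq_rho hN (fun i => ((x i : ℤ))) y _
        (fun j => by simp; ring)) rfl rfl
    rw [Finset.sum_congr rfl fun y _ => hy y, sum_box_collapse hN, rho_box hN]
  rw [Finset.sum_congr rfl fun c _ => Finset.sum_congr rfl fun x _ => step3 c x]
  rw [Finset.sum_comm]
  have hx : ∀ x : Fin d → Fin N,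
      (∑ c : Fin 3, (((S (fun i => ((x i : ℤ))) c * S (fun i => ((x i : ℤ))) c : ℝ)) : ℂ)
        * (N : ℂ) ^ d) = (N : ℂ) ^ d := by
    intro x
    rw [← Finset.sum_mul]
    have : (∑ c : Fin 3, (((S (fun i => ((x i : ℤ))) c * S (fun i => ((x i : ℤ))) c : ℝ)) : ℂ))
        = 1 := by
      rw [← Complex.ofReal_sum]
      rw [sum_sq_eq_one _ (hunit _)]
      simp
    rw [this, one_mul]
  rw [Finset.sum_congr rfl fun x _ => hx x, Finset.sum_const, Finset.card_univ]
  rw [Fintype.card_fun, Fintype.card_fin, Fintype.card_fin]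
  simp [nsmul_eq_mul]

lemma energy_eq (hN : 0 < N)
    (hper : ∀ (x : Fin d → ℤ) (j : Fin d),
      S (x + fun i => if i = j then (N : ℤ) else 0) = S x)
    (J : (Fin d → ℤ) →₀ ℝ) :
    ((∑ x : Fin d → Fin N, ∑ R ∈ J.support,
        J R * ∑ c, S (fun i => ((x i : ℤ))) c * S ((fun i => ((x i : ℤ))) + R) c : ℝ) : ℂ)
        * (N : ℂ) ^ d
      = ∑ m : Fin d → Fin N, (∑ R ∈ J.support, (J R : ℂ) * χ N (fun j => ((m j : ℤ))) R)
          * ∑ c : Fin 3, F N S m c * (starRingEnd ℂ) (F N S m c) := by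
  have step1 : (∑ m : Fin d → Fin N, (∑ R ∈ J.support, (J R : ℂ) * χ N (fun j => ((m j : ℤ))) R)
          * ∑ c : Fin 3, F N S m c * (starRingEnd ℂ) (F N S m c))
      = ∑ m : Fin d → Fin N, ∑ R ∈ J.support, ∑ c : Fin 3, ∑ x : Fin d → Fin N,
          ∑ y : Fin d → Fin N,
          ((J R * (S (fun i => ((x i : ℤ))) c * S (fun i => ((y i : ℤ))) c) : ℝ) : ℂ)
            * χ N (fun j => ((m j : ℤ)))
              (R + ((fun i => ((x i : ℤ))) + -(fun i => ((y i : ℤ))))) := by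
    refine Finset.sum_congr rfl fun m _ => ?_
    rw [Finset.sum_mul]
    refine Finset.sum_congr rfl fun R _ => ?_
    rw [Finset.mul_sum]
    refine Finset.sum_congr rfl fun c _ => ?_
    rw [F_conj, F_def, Finset.sum_mul_sum, Finset.mul_sum]
    refine Finset.sum_congr rfl fun x _ => ?_
    rw [Finset.mul_sum]
    refine Finset.sum_congr rfl fun y _ => ?_
    rw [χ_add, χ_add]
    push_cast
    ring
  have step3 : ∀ R ∈ J.support, ∀ c : Fin 3, ∀ x : Fin d → Fin N,
      (∑ y : Fin d → Fin N, ∑ m : Fin d → Fin N,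
          ((J R * (S (fun i => ((x i : ℤ))) c * S (fun i => ((y i : ℤ))) c) : ℝ) : ℂ)
            * χ N (fun j => ((m j : ℤ)))
              (R + ((fun i => ((x i : ℤ))) + -(fun i => ((y i : ℤ))))))
        = ((J R * (S (fun i => ((x i : ℤ))) c * S ((fun i => ((x i : ℤ))) + R) c) : ℝ) : ℂ)
            * (N : ℂ) ^ d := by
    intro R _ c x
    have hy : ∀ y : Fin d → Fin N,
        (∑ m : Fin d → Fin N,
          ((J R * (S (fun i => ((x i : ℤ))) c * S (fun i => ((y i : ℤ))) c) : ℝ) : ℂ)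
            * χ N (fun j => ((m j : ℤ)))
              (R + ((fun i => ((x i : ℤ))) + -(fun i => ((y i : ℤ))))))
        = if y = rho hN ((fun i => ((x i : ℤ))) + R)
            then ((J R * (S (fun i => ((x i : ℤ))) c * S (fun i => ((y i : ℤ))) c) : ℝ) : ℂ)
              * (N : ℂ) ^ d
            else 0 := by
      intro y
      rw [← Finset.mul_sum, orthd hN, mul_ite, mul_zero]
      exact if_congr (dvd_iff_eq_rho hN ((fun i => ((x i : ℤ))) + R) y _
        (fun j => by simp; ring)) rfl rfl
    rw [Finset.sum_congr rfl fun y _ => hy y, sum_box_collapse hN]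
    rw [S_rho hN hper ((fun i => ((x i : ℤ))) + R)]
  have step3' : (∑ R ∈ J.support, ∑ c : Fin 3, ∑ x : Fin d → Fin N,
        ∑ y : Fin d → Fin N, ∑ m : Fin d → Fin N,
          ((J R * (S (fun i => ((x i : ℤ))) c * S (fun i => ((y i : ℤ))) c) : ℝ) : ℂ)
            * χ N (fun j => ((m j : ℤ)))
              (R + ((fun i => ((x i : ℤ))) + -(fun i => ((y i : ℤ))))))
      = ∑ R ∈ J.support, ∑ c : Fin 3, ∑ x : Fin d → Fin N,
          ((J R * (S (fun i => ((x i : ℤ))) c * S ((fun i => ((x i : ℤ))) + R) c) : ℝ) : ℂ)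
            * (N : ℂ) ^ d :=
    Finset.sum_congr rfl fun R hR => Finset.sum_congr rfl fun c _ =>
      Finset.sum_congr rfl fun x _ => step3 R hR c x
  rw [step1, sum_rot5, step3', sum_rot3, sum_rot3]
  push_cast
  rw [Finset.sum_mul]
  refine Finset.sum_congr rfl fun x _ => ?_
  rw [Finset.sum_mul]
  refine Finset.sum_congr rfl fun R _ => ?_
  rw [Finset.mul_sum, Finset.sum_mul]

end spins

end LTaux

/-- **Luttinger–Tisza lower bound for periodic spin configurations**: the energy density of
any `N`-periodic unit spin configuration is bounded below by the minimum of `Ĵ` over the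
commensurate wavevectors `2πm/N`, `m ∈ {0,…,N−1}^d`. -/
theorem luttinger_tisza_periodic (d N : ℕ) (hN : 1 ≤ N)
    (J : (Fin d → ℤ) →₀ ℝ) (hJ : ∀ R : Fin d → ℤ, J (-R) = J R)
    (S : (Fin d → ℤ) → EuclideanSpace ℝ (Fin 3))
    (hunit : ∀ x, ‖S x‖ = 1)
    (hper : ∀ (x : Fin d → ℤ) (j : Fin d),
      S (x + fun i => if i = j then (N : ℤ) else 0) = S x) :
    ∃ m : Fin d → Fin N,
      Jhat d J (fun j => 2 * Real.pi * (m j : ℝ) / N) ≤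
        (1 / (N : ℝ) ^ d) * ∑ x : Fin d → Fin N, ∑ R ∈ J.support,
          J R * (inner ℝ (S fun i => ((x i : ℤ))) (S ((fun i => ((x i : ℤ))) + R)) : ℝ) := by
  classical
  have hN0 : 0 < N := hN
  haveI : Nonempty (Fin N) := ⟨⟨0, hN0⟩⟩
  have hgoal_sum : (∑ x : Fin d → Fin N, ∑ R ∈ J.support,
      J R * (inner ℝ (S fun i => ((x i : ℤ))) (S ((fun i => ((x i : ℤ))) + R)) : ℝ))
      = ∑ x : Fin d → Fin N, ∑ R ∈ J.support,
        J R * ∑ c, S (fun i => ((x i : ℤ))) c * S ((fun i => ((x i : ℤ))) + R) c := by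
    refine Finset.sum_congr rfl fun x _ => Finset.sum_congr rfl fun R _ => ?_
    rw [LTaux.inner_eq_sum]
  have hC := LTaux.energy_eq (S := S) hN0 hper J
  have hR : ∀ m : Fin d → Fin N,
      (∑ R ∈ J.support, (J R : ℂ) * LTaux.χ N (fun j => ((m j : ℤ))) R)
        * (∑ c : Fin 3, LTaux.F N S m c * (starRingEnd ℂ) (LTaux.F N S m c))
      = (((Jhat d J (fun j => 2 * Real.pi * (m j : ℝ) / N)
          * ∑ c : Fin 3, Complex.normSq (LTaux.F N S m c) : ℝ)) : ℂ) := by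
    intro m
    have hw : (∑ c : Fin 3, LTaux.F N S m c * (starRingEnd ℂ) (LTaux.F N S m c))
        = ((∑ c : Fin 3, Complex.normSq (LTaux.F N S m c) : ℝ) : ℂ) := by
      push_cast
      exact Finset.sum_congr rfl fun c _ => Complex.mul_conj _
    rw [hw, LTaux.Jhat_cast hN0 J hJ m]
    rw [← Complex.ofReal_mul]
    congr 1
  rw [Finset.sum_congr rfl fun m _ => hR m] at hC
  rw [← Complex.ofReal_sum] at hC
  have hEr : (∑ x : Fin d → Fin N, ∑ R ∈ J.support,
        J R * ∑ c, S (fun i => ((x i : ℤ))) c * S ((fun i => ((x i : ℤ))) + R) c)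
        * (N : ℝ) ^ d
      = ∑ m : Fin d → Fin N, Jhat d J (fun j => 2 * Real.pi * (m j : ℝ) / N)
          * ∑ c : Fin 3, Complex.normSq (LTaux.F N S m c) := by
    exact_mod_cast hC
  have hP := LTaux.parseval (S := S) hN0 hunit
  have hws : ∀ m : Fin d → Fin N,
      (∑ c : Fin 3, LTaux.F N S m c * (starRingEnd ℂ) (LTaux.F N S m c))
        = ((∑ c : Fin 3, Complex.normSq (LTaux.F N S m c) : ℝ) : ℂ) := by
    intro m
    push_cast
    exact Finset.sum_congr rfl fun c _ => Complex.mul_conj _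
  rw [Finset.sum_congr rfl fun m _ => hws m, ← Complex.ofReal_sum] at hP
  have hPr : (∑ m : Fin d → Fin N, ∑ c : Fin 3, Complex.normSq (LTaux.F N S m c))
      = (N : ℝ) ^ d * (N : ℝ) ^ d := by
    exact_mod_cast hP
  obtain ⟨m₀, -, hm₀⟩ := Finset.exists_min_image (Finset.univ : Finset (Fin d → Fin N))
    (fun m => Jhat d J (fun j => 2 * Real.pi * (m j : ℝ) / N)) Finset.univ_nonempty
  refine ⟨m₀, ?_⟩
  rw [hgoal_sum]
  set μ := Jhat d J (fun j => 2 * Real.pi * (m₀ j : ℝ) / N) with hμ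
  set E := ∑ x : Fin d → Fin N, ∑ R ∈ J.support,
        J R * ∑ c, S (fun i => ((x i : ℤ))) c * S ((fun i => ((x i : ℤ))) + R) c with hEdef
  have hNd : (0 : ℝ) < (N : ℝ) ^ d := by positivity
  have hlow : μ * ((N : ℝ) ^ d * (N : ℝ) ^ d)
      ≤ ∑ m : Fin d → Fin N, Jhat d J (fun j => 2 * Real.pi * (m j : ℝ) / N)
          * ∑ c : Fin 3, Complex.normSq (LTaux.F N S m c) := by
    rw [← hPr, Finset.mul_sum]
    refine Finset.sum_le_sum fun m _ => ?_
    refine mul_le_mul_of_nonneg_right (hm₀ m (Finset.mem_univ m)) ?_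
    exact Finset.sum_nonneg fun c _ => Complex.normSq_nonneg _
  have h1 : μ * (N : ℝ) ^ d * (N : ℝ) ^ d ≤ E * (N : ℝ) ^ d := by
    rw [hEr]
    calc μ * (N : ℝ) ^ d * (N : ℝ) ^ d = μ * ((N : ℝ) ^ d * (N : ℝ) ^ d) := by ring
    _ ≤ _ := hlow
  have h2 : μ * (N : ℝ) ^ d ≤ E := le_of_mul_le_mul_right h1 hNd
  rw [one_div, inv_mul_eq_div, le_div_iff₀ hNd]
  exact h2
end
end
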